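/- arXiv:1910.13517 — 2 statements merged into one kernel-verified Lean document; each statement's English description precedes it below -/
import Mathlib

section
/- (Kochen–Stone theorem) Let (A_n) be a sequence of events in a probability space with sum_n P[A_n] = ∞. Then P[A_n infinitely often] ≥ limsup_{k→∞} ( sum_{i_0 ≤ i < j ≤ k} P[A_i]P[A_j] ) / ( sum_{i_0 ≤ i < j ≤ k} P[A_i ∩ A_j] ), for any fixed starting index i_0. -/
open MeasureTheory Filter

noncomputable section

open scoped ENNReal Topology

namespace KochenStoneAux


lemma tri {R : Type*} [CommSemiring R] (q : ℕ → ℕ → R) (hq : ∀ i j, q i j = q j i)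
    (m k : ℕ) :
    ∑ j ∈ Finset.Icc m k, ∑ i ∈ Finset.Icc m k, q i j
      = ∑ j ∈ Finset.Icc m k, q j j
        + 2 * ∑ j ∈ Finset.Icc m k, ∑ i ∈ Finset.Ico m j, q i j := by
  induction k with
  | zero =>
    rcases Nat.eq_zero_or_pos m with rfl | hm
    · simp
    · rw [Finset.Icc_eq_empty (by omega)]; simp
  | succ k ih =>
    by_cases hmk : m ≤ k
    · have hins : Finset.Icc m (k + 1) = insert (k + 1) (Finset.Icc m k) := by
        ext x; simp only [Finset.mem_Icc, Finset.mem_insert]; omega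
      have hnot : (k + 1) ∉ Finset.Icc m k := by simp
      have hIco : Finset.Ico m (k + 1) = Finset.Icc m k := by
        rw [Finset.Ico_add_one_right_eq_Icc]
      have hswap : ∑ j ∈ Finset.Icc m k, q (k+1) j = ∑ j ∈ Finset.Icc m k, q j (k+1) :=
        Finset.sum_congr rfl (fun j _ => hq _ _)
      rw [hins]
      simp only [Finset.sum_insert hnot, Finset.sum_add_distrib]
      rw [hIco, ih, hswap]
      ring
    · by_cases hmk1 : m ≤ k + 1
      · have hm : m = k + 1 := by omega
        subst hm
        simp [Finset.Icc_self, Finset.Ico_self]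
      · rw [Finset.Icc_eq_empty (by omega)]; simp



lemma cs {Ω : Type*} {m0 : MeasurableSpace Ω} (μ : Measure Ω) {f g : Ω → ℝ≥0∞}
    (hf : AEMeasurable f μ) (hg : AEMeasurable g μ) :
    (∫⁻ a, f a * g a ∂μ) ^ 2 ≤ (∫⁻ a, f a ^ 2 ∂μ) * (∫⁻ a, g a ^ 2 ∂μ) := by
  have hpq : Real.HolderConjugate 2 2 := Real.holderConjugate_iff.mpr ⟨one_lt_two, by norm_num⟩
  have h := ENNReal.lintegral_mul_le_Lp_mul_Lq μ hpq hf hg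
  have h2 : ∀ x : ℝ≥0∞, x ^ (2 : ℝ) = x ^ (2 : ℕ) := fun x => by
    rw [show (2 : ℝ) = ((2 : ℕ) : ℝ) by norm_num, ENNReal.rpow_natCast]
  simp only [h2] at h
  have h3 : ∀ x : ℝ≥0∞, (x ^ (1/2 : ℝ)) ^ (2 : ℕ) = x := fun x => by
    rw [← ENNReal.rpow_natCast (x ^ (1/2 : ℝ)) 2, ← ENNReal.rpow_mul]
    norm_num
  calc (∫⁻ a, (f a) * (g a) ∂μ) ^ 2
      ≤ ((∫⁻ a, f a ^ (2:ℕ) ∂μ) ^ (1/2:ℝ) * (∫⁻ a, g a ^ (2:ℕ) ∂μ) ^ (1/2:ℝ)) ^ 2 := by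
        exact pow_le_pow_left₀ zero_le h 2
    _ = (∫⁻ a, f a ^ 2 ∂μ) * (∫⁻ a, g a ^ 2 ∂μ) := by
        rw [mul_pow, h3, h3]

lemma pz {Ω : Type*} {m0 : MeasurableSpace Ω} (μ : Measure Ω) [IsProbabilityMeasure μ]
    (A : ℕ → Set Ω) (hA : ∀ n, MeasurableSet (A n)) (s : Finset ℕ) :
    (∑ i ∈ s, μ (A i)) ^ 2
      ≤ (∑ j ∈ s, ∑ i ∈ s, μ (A i ∩ A j)) * μ (⋃ i ∈ s, A i) := by
  set U := ⋃ i ∈ s, A i with hU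
  have hUm : MeasurableSet U := MeasurableSet.biUnion s.countable_toSet (fun i _ => hA i)
  set f : Ω → ℝ≥0∞ := fun ω => ∑ i ∈ s, (A i).indicator 1 ω with hf
  have hfim : ∀ i : ℕ, Measurable ((A i).indicator (1 : Ω → ℝ≥0∞)) :=
    fun i => measurable_one.indicator (hA i)
  have hfm : Measurable f := Finset.measurable_sum s (fun i _ => hfim i)
  set g : Ω → ℝ≥0∞ := U.indicator 1 with hg
  have hgm : Measurable g := measurable_one.indicator hUm
  have hfg : ∀ ω, f ω * g ω = f ω := by
    intro ω
    by_cases hω : ω ∈ U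
    · simp [hg, Set.indicator_of_mem hω]
    · have h0 : f ω = 0 := by
        refine Finset.sum_eq_zero fun i hi => ?_
        exact Set.indicator_of_notMem (fun h => hω (Set.mem_biUnion hi h)) _
      simp [h0]
  have hf1 : ∫⁻ ω, f ω ∂μ = ∑ i ∈ s, μ (A i) := by
    rw [hf, lintegral_finset_sum _ (fun i _ => hfim i)]
    exact Finset.sum_congr rfl fun i _ => lintegral_indicator_one (hA i)
  have hf2 : ∫⁻ ω, f ω ^ 2 ∂μ = ∑ j ∈ s, ∑ i ∈ s, μ (A i ∩ A j) := by
    have hpt : ∀ ω, f ω ^ 2 = ∑ j ∈ s, ∑ i ∈ s, (A i ∩ A j).indicator 1 ω := by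
      intro ω
      rw [sq, hf]
      rw [Finset.sum_mul_sum]
      rw [Finset.sum_comm]
      refine Finset.sum_congr rfl fun j _ => Finset.sum_congr rfl fun i _ => ?_
      rw [Set.inter_indicator_one]
      rfl
    calc ∫⁻ ω, f ω ^ 2 ∂μ = ∫⁻ ω, ∑ j ∈ s, ∑ i ∈ s, (A i ∩ A j).indicator 1 ω ∂μ :=
          lintegral_congr hpt
      _ = ∑ j ∈ s, ∑ i ∈ s, μ (A i ∩ A j) := by
          rw [lintegral_finset_sum _ (fun j _ => Finset.measurable_sum s
            (fun i _ => measurable_one.indicator ((hA i).inter (hA j))))]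
          refine Finset.sum_congr rfl fun j _ => ?_
          rw [lintegral_finset_sum _ (fun i _ => measurable_one.indicator ((hA i).inter (hA j)))]
          exact Finset.sum_congr rfl fun i _ => lintegral_indicator_one ((hA i).inter (hA j))
  have hg2 : ∫⁻ ω, g ω ^ 2 ∂μ = μ U := by
    have hpt : ∀ ω, g ω ^ 2 = g ω := by
      intro ω
      by_cases hω : ω ∈ U <;>
        simp [hg, Set.indicator_of_mem, Set.indicator_of_notMem, hω]
    rw [lintegral_congr hpt, hg, lintegral_indicator_one hUm]
  calc (∑ i ∈ s, μ (A i)) ^ 2 = (∫⁻ ω, f ω * g ω ∂μ) ^ 2 := by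
        rw [lintegral_congr hfg, hf1]
    _ ≤ (∫⁻ ω, f ω ^ 2 ∂μ) * (∫⁻ ω, g ω ^ 2 ∂μ) :=
        cs μ hfm.aemeasurable hgm.aemeasurable
    _ = (∑ j ∈ s, ∑ i ∈ s, μ (A i ∩ A j)) * μ U := by rw [hf2, hg2]



variable {Ω : Type*} {m0 : MeasurableSpace Ω}

/-- first moment -/
noncomputable def TT (μ : Measure Ω) (A : ℕ → Set Ω) (m k : ℕ) : ℝ :=
  ∑ i ∈ Finset.Icc m k, (μ (A i)).toReal

/-- off-diagonal second moment -/
noncomputable def DD (μ : Measure Ω) (A : ℕ → Set Ω) (m k : ℕ) : ℝ :=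
  ∑ j ∈ Finset.Icc m k, ∑ i ∈ Finset.Ico m j, (μ (A i ∩ A j)).toReal

noncomputable def NN (μ : Measure Ω) (A : ℕ → Set Ω) (m k : ℕ) : ℝ :=
  ∑ j ∈ Finset.Icc m k, ∑ i ∈ Finset.Ico m j, (μ (A i)).toReal * (μ (A j)).toReal

lemma TT_nonneg (μ : Measure Ω) (A : ℕ → Set Ω) (m k : ℕ) : 0 ≤ TT μ A m k :=
  Finset.sum_nonneg fun _ _ => ENNReal.toReal_nonneg

lemma DD_nonneg (μ : Measure Ω) (A : ℕ → Set Ω) (m k : ℕ) : 0 ≤ DD μ A m k :=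
  Finset.sum_nonneg fun _ _ => Finset.sum_nonneg fun _ _ => ENNReal.toReal_nonneg

lemma NN_nonneg (μ : Measure Ω) (A : ℕ → Set Ω) (m k : ℕ) : 0 ≤ NN μ A m k :=
  Finset.sum_nonneg fun _ _ => Finset.sum_nonneg fun _ _ =>
    mul_nonneg ENNReal.toReal_nonneg ENNReal.toReal_nonneg

/-- 2 N ≤ T²  -/
lemma two_NN_le_sq (μ : Measure Ω) (A : ℕ → Set Ω) (m k : ℕ) :
    2 * NN μ A m k ≤ (TT μ A m k) ^ 2 := by
  have h := tri (R := ℝ) (fun i j => (μ (A i)).toReal * (μ (A j)).toReal)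
    (fun i j => mul_comm _ _) m k
  have hsq : (TT μ A m k) ^ 2
      = ∑ j ∈ Finset.Icc m k, ∑ i ∈ Finset.Icc m k,
          (μ (A i)).toReal * (μ (A j)).toReal := by
    rw [sq, TT, Finset.sum_mul_sum]
    exact Finset.sum_comm
  rw [hsq, h]
  have : (0:ℝ) ≤ ∑ j ∈ Finset.Icc m k, (μ (A j)).toReal * (μ (A j)).toReal :=
    Finset.sum_nonneg fun _ _ => mul_nonneg ENNReal.toReal_nonneg ENNReal.toReal_nonneg
  rw [NN]
  linarith

/-- Paley–Zygmund consequence in ℝ -/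
lemma L1 (μ : Measure Ω) [IsProbabilityMeasure μ] (A : ℕ → Set Ω)
    (hA : ∀ n, MeasurableSet (A n)) (m k : ℕ) :
    (TT μ A m k) ^ 2
      ≤ (μ (⋃ i, ⋃ (_ : m ≤ i), A i)).toReal * (TT μ A m k + 2 * DD μ A m k) := by
  classical
  set s := Finset.Icc m k with hs
  set B := ⋃ i, ⋃ (_ : m ≤ i), A i with hB
  have hUB : (⋃ i ∈ s, A i) ⊆ B := by
    refine Set.iUnion₂_subset fun i hi => ?_
    have him : m ≤ i := (Finset.mem_Icc.mp hi).1
    exact Set.subset_iUnion₂ (s := fun i _ => A i) i him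
  have key : (∑ i ∈ s, μ (A i)) ^ 2
      ≤ (∑ j ∈ s, ∑ i ∈ s, μ (A i ∩ A j)) * μ B :=
    le_trans (pz μ A hA s) (mul_le_mul_right (measure_mono hUB) _)
  have htri : ∑ j ∈ s, ∑ i ∈ s, μ (A i ∩ A j)
      = ∑ j ∈ s, μ (A j) + 2 * ∑ j ∈ s, ∑ i ∈ Finset.Ico m j, μ (A i ∩ A j) := by
    have := tri (R := ℝ≥0∞) (fun i j => μ (A i ∩ A j))
      (fun i j => by rw [Set.inter_comm]) m k
    simpa [Set.inter_self] using this
  rw [htri] at key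
  -- finiteness
  have hT : (∑ j ∈ s, μ (A j)) ≠ ⊤ := (ENNReal.sum_lt_top.mpr fun _ _ => measure_lt_top μ _).ne
  have hD : (∑ j ∈ s, ∑ i ∈ Finset.Ico m j, μ (A i ∩ A j)) ≠ ⊤ :=
    (ENNReal.sum_lt_top.mpr fun _ _ =>
      ENNReal.sum_lt_top.mpr fun _ _ => measure_lt_top μ _).ne
  have hRHS : (∑ j ∈ s, μ (A j) + 2 * ∑ j ∈ s, ∑ i ∈ Finset.Ico m j, μ (A i ∩ A j)) * μ B ≠ ⊤ := by
    refine ENNReal.mul_ne_top ?_ (measure_ne_top μ B)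
    exact ENNReal.add_ne_top.mpr ⟨hT, ENNReal.mul_ne_top (by simp) hD⟩
  have := ENNReal.toReal_mono hRHS key
  rw [ENNReal.toReal_pow, ENNReal.toReal_mul, ENNReal.toReal_add hT
      (ENNReal.mul_ne_top (by simp) hD), ENNReal.toReal_mul] at this
  rw [ENNReal.toReal_sum (fun _ _ => measure_ne_top μ _)] at this
  have hDsum : (∑ j ∈ s, ∑ i ∈ Finset.Ico m j, μ (A i ∩ A j)).toReal = DD μ A m k := by
    rw [ENNReal.toReal_sum (fun _ _ => (ENNReal.sum_lt_top.mpr fun _ _ => measure_lt_top μ _).ne)]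
    exact Finset.sum_congr rfl fun j _ =>
      ENNReal.toReal_sum (fun _ _ => measure_ne_top μ _)
  rw [hDsum] at this
  have hfin : (TT μ A m k) ^ 2 ≤ (TT μ A m k + 2 * DD μ A m k) * (μ B).toReal := by
    simpa [TT] using this
  rw [mul_comm] at hfin
  exact hfin

lemma TT_split (μ : Measure Ω) (A : ℕ → Set Ω) {i0 m k : ℕ} (h1 : i0 ≤ m) (h2 : m ≤ k + 1) :
    TT μ A i0 k = (∑ i ∈ Finset.Ico i0 m, (μ (A i)).toReal) + TT μ A m k := by
  rw [TT, TT, ← Finset.Ico_add_one_right_eq_Icc, ← Finset.Ico_add_one_right_eq_Icc]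
  exact (Finset.sum_Ico_consecutive _ h1 h2).symm

lemma TT_tendsto (μ : Measure Ω) [IsFiniteMeasure μ] (A : ℕ → Set Ω)
    (hdiv : ∑' n : ℕ, μ (A n) = ⊤) (i0 : ℕ) :
    Tendsto (fun k => TT μ A i0 k) atTop atTop := by
  set r : ℕ → ℝ := fun k => ∑ i ∈ Finset.range k, (μ (A i)).toReal with hr
  have hrt : Tendsto r atTop atTop := by
    have hENN : Tendsto (fun k => ∑ i ∈ Finset.range k, μ (A i)) atTop (𝓝 ⊤) := by
      rw [← hdiv]; exact ENNReal.tendsto_nat_tsum _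
    refine tendsto_atTop.mpr fun C => ?_
    have hC : ENNReal.ofReal C < ⊤ := ENNReal.ofReal_lt_top
    have hmem := hENN (Ioi_mem_nhds hC)
    filter_upwards [hmem] with k hk
    have hne : (∑ i ∈ Finset.range k, μ (A i)) ≠ ⊤ :=
      (ENNReal.sum_lt_top.mpr fun _ _ => measure_lt_top μ _).ne
    have : ENNReal.ofReal C ≤ ∑ i ∈ Finset.range k, μ (A i) := le_of_lt hk
    have := (ENNReal.ofReal_le_iff_le_toReal hne).mp this
    rwa [ENNReal.toReal_sum (fun _ _ => measure_ne_top μ _)] at this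
  have heq : ∀ k, i0 ≤ k → TT μ A i0 k = r (k + 1) + (- r i0) := by
    intro k hk
    have : r (k+1) = r i0 + TT μ A i0 k := by
      simp only [hr, TT, Finset.range_eq_Ico, ← Finset.Ico_add_one_right_eq_Icc]
      exact (Finset.sum_Ico_consecutive _ (Nat.zero_le _) (by omega)).symm
    linarith
  have ht2 : Tendsto (fun k => r (k + 1) + (- r i0)) atTop atTop :=
    tendsto_atTop_add_const_right _ _ (hrt.comp (tendsto_add_atTop_nat 1))
  exact Tendsto.congr' (by filter_upwards [eventually_ge_atTop i0] with k hk using (heq k hk).symm) ht2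

lemma step_A (μ : Measure Ω) [IsProbabilityMeasure μ] (A : ℕ → Set Ω)
    (hA : ∀ n, MeasurableSet (A n)) (x : ℝ)
    (hx : ∀ m : ℕ, x ≤ (μ (⋃ i, ⋃ (_ : m ≤ i), A i)).toReal) :
    x ≤ (μ (limsup A atTop)).toReal := by
  have hlim : limsup A atTop = ⋂ m : ℕ, ⋃ i, ⋃ (_ : m ≤ i), A i := by
    rw [limsup_eq_iInf_iSup_of_nat]
    simp only [Set.iInf_eq_iInter, Set.iSup_eq_iUnion]
  have hmeas : ∀ m : ℕ, NullMeasurableSet (⋃ i, ⋃ (_ : m ≤ i), A i) μ := fun m =>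
    (MeasurableSet.iUnion fun i => MeasurableSet.iUnion fun _ => hA i).nullMeasurableSet
  have hanti : Antitone (fun m : ℕ => ⋃ i, ⋃ (_ : m ≤ i), A i) := fun a b hab =>
    Set.iUnion₂_mono' fun i hi => ⟨i, le_trans hab hi, subset_rfl⟩
  have htend := tendsto_measure_iInter_atTop hmeas hanti ⟨0, measure_ne_top μ _⟩
  have hge : ENNReal.ofReal x ≤ μ (⋂ m : ℕ, ⋃ i, ⋃ (_ : m ≤ i), A i) :=
    ge_of_tendsto' htend fun m => ENNReal.ofReal_le_of_le_toReal (hx m)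
  rw [hlim]
  exact (ENNReal.ofReal_le_iff_le_toReal (measure_ne_top μ _)).mp hge


lemma L2 (μ : Measure Ω) [IsProbabilityMeasure μ] (A : ℕ → Set Ω)
    (hA : ∀ n, MeasurableSet (A n)) (m k : ℕ) :
    (TT μ A m k) ^ 2 ≤ TT μ A m k + 2 * DD μ A m k := by
  have h := L1 μ A hA m k
  have h1 : (μ (⋃ i, ⋃ (_ : m ≤ i), A i)).toReal ≤ 1 := by
    have := prob_le_one (μ := μ) (s := ⋃ i, ⋃ (_ : m ≤ i), A i)
    simpa using ENNReal.toReal_mono (by simp) this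
  have h2 : 0 ≤ TT μ A m k + 2 * DD μ A m k := by
    have := TT_nonneg μ A m k; have := DD_nonneg μ A m k; linarith
  calc (TT μ A m k) ^ 2 ≤ _ := h
    _ ≤ TT μ A m k + 2 * DD μ A m k := mul_le_of_le_one_left h2 h1

lemma DD_mono (μ : Measure Ω) (A : ℕ → Set Ω) {i0 m : ℕ} (h : i0 ≤ m) (k : ℕ) :
    DD μ A m k ≤ DD μ A i0 k := by
  refine le_trans (Finset.sum_le_sum fun j _ =>
    Finset.sum_le_sum_of_subset_of_nonneg (Finset.Ico_subset_Ico h le_rfl)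
      (fun _ _ _ => ENNReal.toReal_nonneg)) ?_
  exact Finset.sum_le_sum_of_subset_of_nonneg (Finset.Icc_subset_Icc h le_rfl)
    (fun _ _ _ => Finset.sum_nonneg fun _ _ => ENNReal.toReal_nonneg)

lemma NN_le (μ : Measure Ω) (A : ℕ → Set Ω) {i0 m k : ℕ} (h1 : i0 ≤ m) (h2 : m ≤ k + 1) :
    NN μ A i0 k ≤ (∑ i ∈ Finset.Ico i0 m, (μ (A i)).toReal) * TT μ A i0 k + NN μ A m k := by
  classical
  set p : ℕ → ℝ := fun i => (μ (A i)).toReal with hp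
  have hp0 : ∀ i, 0 ≤ p i := fun i => ENNReal.toReal_nonneg
  set c := ∑ i ∈ Finset.Ico i0 m, p i with hc
  have hc0 : 0 ≤ c := Finset.sum_nonneg fun _ _ => hp0 _
  set F : ℕ → ℝ := fun j => ∑ i ∈ Finset.Ico i0 j, p i * p j with hF
  have hsplit : NN μ A i0 k = ∑ j ∈ Finset.Ico i0 m, F j + ∑ j ∈ Finset.Icc m k, F j := by
    rw [NN, ← Finset.Ico_add_one_right_eq_Icc]
    exact (Finset.sum_Ico_consecutive _ h1 h2).symm
  have hfirst : ∑ j ∈ Finset.Ico i0 m, F j ≤ ∑ j ∈ Finset.Ico i0 m, c * p j := by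
    refine Finset.sum_le_sum fun j hj => ?_
    have hjm : j ≤ m := le_of_lt (Finset.mem_Ico.mp hj).2
    calc F j ≤ ∑ i ∈ Finset.Ico i0 m, p i * p j := by
          refine Finset.sum_le_sum_of_subset_of_nonneg
            (Finset.Ico_subset_Ico le_rfl hjm) (fun _ _ _ => mul_nonneg (hp0 _) (hp0 _))
      _ = c * p j := by rw [hc, Finset.sum_mul]
  have hsecond : ∀ j ∈ Finset.Icc m k,
      F j = c * p j + ∑ i ∈ Finset.Ico m j, p i * p j := by
    intro j hj
    have hmj : m ≤ j := (Finset.mem_Icc.mp hj).1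
    rw [hF]
    simp only
    rw [← Finset.sum_Ico_consecutive (fun i => p i * p j) h1 hmj, hc, Finset.sum_mul]
  have hsum2 : ∑ j ∈ Finset.Icc m k, F j
      = c * TT μ A m k + NN μ A m k := by
    rw [Finset.sum_congr rfl hsecond, Finset.sum_add_distrib, ← Finset.mul_sum]
    rfl
  have hTsplit : TT μ A i0 k = c + TT μ A m k := TT_split μ A h1 h2
  have hTm0 : 0 ≤ TT μ A m k := TT_nonneg μ A m k
  have hsum1 : ∑ j ∈ Finset.Ico i0 m, c * p j = c * c := by
    rw [← Finset.mul_sum, ← hc]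
  calc NN μ A i0 k = ∑ j ∈ Finset.Ico i0 m, F j + ∑ j ∈ Finset.Icc m k, F j := hsplit
    _ ≤ c * c + (c * TT μ A m k + NN μ A m k) := by
        rw [hsum2]; exact add_le_add (le_trans hfirst (le_of_eq hsum1)) le_rfl
    _ ≤ c * TT μ A i0 k + NN μ A m k := by
        rw [hTsplit]; nlinarith [hc0, hTm0]

end KochenStoneAux

open KochenStoneAux
set_option maxHeartbeats 1000000

/-- The Kochen–Stone theorem: if `∑ P[A n] = ∞`, then
`P[A_n i.o.] ≥ limsup_k (∑_{i0 ≤ i < j ≤ k} P[A_i] P[A_j]) / (∑_{i0 ≤ i < j ≤ k} P[A_i ∩ A_j])`. -/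
theorem kochen_stone {Ω : Type*} {m0 : MeasurableSpace Ω}
    (μ : Measure Ω) [IsProbabilityMeasure μ]
    (A : ℕ → Set Ω) (hA : ∀ n, MeasurableSet (A n))
    (hdiv : ∑' n : ℕ, μ (A n) = ⊤) (i0 : ℕ) :
    (μ (limsup A atTop)).toReal ≥
      limsup (fun k : ℕ =>
        (∑ j ∈ Finset.Icc i0 k, ∑ i ∈ Finset.Ico i0 j,
            (μ (A i)).toReal * (μ (A j)).toReal) /
        (∑ j ∈ Finset.Icc i0 k, ∑ i ∈ Finset.Ico i0 j,
            (μ (A i ∩ A j)).toReal)) atTop := by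
  classical
  have hQdef : (fun k : ℕ =>
        (∑ j ∈ Finset.Icc i0 k, ∑ i ∈ Finset.Ico i0 j,
            (μ (A i)).toReal * (μ (A j)).toReal) /
        (∑ j ∈ Finset.Icc i0 k, ∑ i ∈ Finset.Ico i0 j,
            (μ (A i ∩ A j)).toReal))
      = fun k => NN μ A i0 k / DD μ A i0 k := rfl
  rw [hQdef]
  set Q : ℕ → ℝ := fun k => NN μ A i0 k / DD μ A i0 k with hQ
  have hQ0 : ∀ k, 0 ≤ Q k := fun k => div_nonneg (NN_nonneg μ A i0 k) (DD_nonneg μ A i0 k)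
  clear_value Q
  by_cases hbdd : IsBoundedUnder (· ≤ ·) atTop Q
  swap
  · rw [ge_iff_le, limsup_eq]
    have hempty : {a : ℝ | ∀ᶠ k in atTop, Q k ≤ a} = ∅ := by
      ext a
      simp only [Set.mem_setOf_eq, Set.mem_empty_iff_false, iff_false]
      intro h
      exact hbdd ⟨a, h⟩
    rw [hempty, Real.sInf_empty]
    exact ENNReal.toReal_nonneg
  rw [ge_iff_le]
  set L := limsup Q atTop with hL
  clear_value L
  refine le_of_forall_pos_le_add fun ε hε => ?_
  have main : L - ε ≤ (μ (limsup A atTop)).toReal := by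
    by_cases hLε : L - ε ≤ 0
    · exact le_trans hLε ENNReal.toReal_nonneg
    push_neg at hLε
    set G := L - ε / 2 with hGdef
    clear_value G
    have hGpos : 0 < G := by rw [hGdef]; linarith
    have hcob : IsCoboundedUnder (· ≤ ·) atTop Q :=
      isCoboundedUnder_le_of_le atTop (x := 0) hQ0
    have hfreq : ∃ᶠ k in atTop, G < Q k :=
      frequently_lt_of_lt_limsup hcob (by rw [← hL, hGdef]; linarith)
    refine step_A μ A hA (L - ε) fun m => ?_
    set m' := max m i0 with hm'
    have hsub : (⋃ i, ⋃ (_ : m' ≤ i), A i) ⊆ ⋃ i, ⋃ (_ : m ≤ i), A i :=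
      Set.iUnion₂_mono' fun i hi => ⟨i, le_trans (le_max_left m i0) hi, subset_rfl⟩
    refine le_trans ?_ (ENNReal.toReal_mono (measure_ne_top μ _) (measure_mono hsub))
    have hi0m : i0 ≤ m' := le_max_right m i0
    set c := ∑ i ∈ Finset.Ico i0 m', (μ (A i)).toReal with hc
    clear_value c
    have hc0 : 0 ≤ c := by
      rw [hc]; exact Finset.sum_nonneg fun _ _ => ENNReal.toReal_nonneg
    set M : ℝ := 2 + c + (2 / ε) * (2 * c + G) with hM
    clear_value M
    have hX0 : 0 ≤ (2 / ε) * (2 * c + G) := mul_nonneg (by positivity) (by linarith)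
    have hMnn : 2 + c ≤ M := by rw [hM]; linarith
    have hMev : ∀ᶠ k in atTop, M ≤ TT μ A i0 k :=
      (TT_tendsto μ A hdiv i0).eventually_ge_atTop M
    have hkev : ∀ᶠ k in atTop, m' ≤ k := eventually_ge_atTop m'
    obtain ⟨k, hQk, hMk, hm'k⟩ := (hfreq.and_eventually (hMev.and hkev)).exists
    rw [hQ] at hQk
    have hQk : G < NN μ A i0 k / DD μ A i0 k := hQk
    have hm'k1 : m' ≤ k + 1 := by omega
    set T := TT μ A i0 k with hT
    set D := DD μ A i0 k with hD
    set N := NN μ A i0 k with hN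
    set Tm := TT μ A m' k with hTm
    set Dm := DD μ A m' k with hDm
    set Nm := NN μ A m' k with hNm
    have hL2 : T ^ 2 ≤ T + 2 * D := by rw [hT, hD]; exact L2 μ A hA i0 k
    have hTsplit : T = c + Tm := by rw [hT, hTm, hc]; exact TT_split μ A hi0m hm'k1
    have hNle : N ≤ c * T + Nm := by rw [hN, hc, hT, hNm]; exact NN_le μ A hi0m hm'k1
    have hDmle : Dm ≤ D := by rw [hDm, hD]; exact DD_mono μ A hi0m k
    have hNm2 : 2 * Nm ≤ Tm ^ 2 := by rw [hNm, hTm]; exact two_NN_le_sq μ A m' k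
    have hDm0 : 0 ≤ Dm := by rw [hDm]; exact DD_nonneg μ A m' k
    have hPZ : Tm ^ 2 ≤ (μ (⋃ i, ⋃ (_ : m' ≤ i), A i)).toReal * (Tm + 2 * Dm) := by
      rw [hTm, hDm]; exact L1 μ A hA m' k
    clear_value T D N Tm Dm Nm
    have hT2 : 2 ≤ T := by linarith
    have hDpos : 0 < D := by
      nlinarith [mul_nonneg (by linarith : (0:ℝ) ≤ T - 2) (by linarith : (0:ℝ) ≤ T + 1)]
    have hNGD : G * D ≤ N := le_of_lt ((lt_div_iff₀ hDpos).mp hQk)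
    have haux : (2 * c + G) * T ≤ ε * D := by
      have h1 : (2 / ε) * (2 * c + G) ≤ T - 1 := by linarith
      have h2 : 2 * c + G ≤ (ε / 2) * (T - 1) := by
        have h2a := mul_le_mul_of_nonneg_left h1 (le_of_lt (show (0:ℝ) < ε / 2 by linarith))
        calc 2 * c + G = (ε / 2) * ((2 / ε) * (2 * c + G)) := by
              field_simp
          _ ≤ (ε / 2) * (T - 1) := h2a
      have h3 : (2 * c + G) * T ≤ (ε / 2) * (T - 1) * T :=
        mul_le_mul_of_nonneg_right h2 (by linarith)
      have h4 : (ε / 2) * (T - 1) * T ≤ ε * D := by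
        nlinarith [mul_nonneg (le_of_lt hε) (by linarith : (0:ℝ) ≤ T + 2 * D - T ^ 2)]
      linarith
    have hchain1 : (L - ε) * (T + 2 * D) ≤ Tm ^ 2 := by
      have e3 : (L - ε) * (T + 2 * D) ≤ 2 * G * D - 2 * c * T := by
        have hLG : L - ε = G - ε / 2 := by rw [hGdef]; ring
        rw [hLG]
        nlinarith [haux, mul_pos hε (show (0:ℝ) < T by linarith)]
      linarith
    have hTmpos : 0 < Tm + 2 * Dm := by linarith
    have hchain2 : (L - ε) * (Tm + 2 * Dm) ≤ Tm ^ 2 := by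
      have h5 : (L - ε) * (Tm + 2 * Dm) ≤ (L - ε) * (T + 2 * D) := by
        apply mul_le_mul_of_nonneg_left _ (le_of_lt hLε)
        linarith
      linarith
    exact le_of_mul_le_mul_right (le_trans hchain2 hPZ) hTmpos
  linarith
end
end

section
/- For every δ ∈ (0,1) there is a constant C_δ such that for all large k, sum over pairs of integers i_0 ≤ i < j ≤ k of (1/(i ln i)) * (ln j)/(j ln^2 j - i ln^2 i) ≤ (1/2 + o(1)) ln^2 ln k as k → ∞ (with i_0 ≥ 3 fixed so that all terms are well-defined and positive). -/
open Filter

section DSEproof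
open Real Set

namespace DSE

/-- derivative of log log -/
lemma hasDerivAt_loglog {x : ℝ} (hx : 1 < x) :
    HasDerivAt (fun y => Real.log (Real.log y)) (1 / (x * Real.log x)) x := by
  have hx0 : x ≠ 0 := by linarith
  have hlx : Real.log x ≠ 0 := ne_of_gt (Real.log_pos hx)
  have h := (Real.hasDerivAt_log hlx).comp x (Real.hasDerivAt_log hx0)
  refine h.congr_deriv ?_
  field_simp

lemma contOn_loglog {s : Set ℝ} (hs : ∀ x ∈ s, 1 < x) :
    ContinuousOn (fun y => Real.log (Real.log y)) s := by
  apply Real.continuousOn_log.comp (Real.continuousOn_log.mono ?_) ?_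
  · intro x hx; exact ne_of_gt (lt_trans one_pos (hs x hx))
  · intro x hx; exact ne_of_gt (Real.log_pos (hs x hx))

lemma contOn_g {s : Set ℝ} (hs : ∀ x ∈ s, 1 < x) :
    ContinuousOn (fun y => 1 / (y * Real.log y)) s := by
  apply ContinuousOn.div continuousOn_const
  · exact continuousOn_id.mul (Real.continuousOn_log.mono
      (fun x hx => ne_of_gt (lt_trans one_pos (hs x hx))))
  · intro x hx
    have h1 := hs x hx
    have : 0 < x * Real.log x := mul_pos (lt_trans one_pos h1) (Real.log_pos h1)
    exact ne_of_gt this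

lemma integral_g {a b : ℝ} (ha : 1 < a) (hab : a ≤ b) :
    ∫ x in a..b, 1 / (x * Real.log x)
      = Real.log (Real.log b) - Real.log (Real.log a) := by
  have hsub : Set.uIcc a b ⊆ {x : ℝ | 1 < x} := by
    rw [Set.uIcc_of_le hab]; intro x hx; exact lt_of_lt_of_le ha hx.1
  apply intervalIntegral.integral_eq_sub_of_hasDerivAt
  · intro x hx; exact hasDerivAt_loglog (hsub hx)
  · exact (contOn_g (fun x hx => hsub hx)).intervalIntegrable

lemma integral_h {c a b : ℝ} (ha : 1 < a) (hab : a ≤ b) :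
    ∫ x in a..b, (c - Real.log (Real.log x)) * (1 / (x * Real.log x))
      = (c * Real.log (Real.log b) - (Real.log (Real.log b)) ^ 2 / 2)
        - (c * Real.log (Real.log a) - (Real.log (Real.log a)) ^ 2 / 2) := by
  have hsub : Set.uIcc a b ⊆ {x : ℝ | 1 < x} := by
    rw [Set.uIcc_of_le hab]; intro x hx; exact lt_of_lt_of_le ha hx.1
  apply intervalIntegral.integral_eq_sub_of_hasDerivAt
  · intro x hx
    have hx1 : 1 < x := hsub hx
    have hd := hasDerivAt_loglog hx1
    have h := ((hd.const_mul c).sub ((hd.pow 2).div_const 2))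
    refine h.congr_deriv ?_
    ring
  · apply ContinuousOn.intervalIntegrable
    exact ((continuousOn_const.sub (contOn_loglog (fun x hx => hsub hx))).mul
      (contOn_g (fun x hx => hsub hx)))

lemma g_anti {b : ℝ} : AntitoneOn (fun y => 1 / (y * Real.log y)) (Set.Icc 2 b) := by
  intro x hx y hy hxy
  have hx2 : (2:ℝ) ≤ x := hx.1
  have h1x : (1:ℝ) < x := by linarith
  have h1y : (1:ℝ) < y := by linarith
  have hpx : 0 < x * Real.log x := mul_pos (by linarith) (Real.log_pos h1x)
  apply one_div_le_one_div_of_le hpx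
  apply mul_le_mul hxy (Real.log_le_log (by linarith) hxy) (Real.log_nonneg (le_of_lt h1x))
    (by linarith)

lemma h_anti {c b : ℝ} (hcb : Real.log (Real.log b) ≤ c) :
    AntitoneOn (fun y => (c - Real.log (Real.log y)) * (1 / (y * Real.log y)))
      (Set.Icc 2 b) := by
  intro x hx y hy hxy
  have h1x : (1:ℝ) < x := by linarith [hx.1]
  have h1y : (1:ℝ) < y := by linarith [hy.1]
  have hgy : (0:ℝ) ≤ 1 / (y * Real.log y) :=
    le_of_lt (one_div_pos.mpr (mul_pos (by linarith) (Real.log_pos h1y)))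
  have hlxy : Real.log (Real.log x) ≤ Real.log (Real.log y) := by
    apply Real.log_le_log (Real.log_pos h1x) (Real.log_le_log (by linarith) hxy)
  have hlyb : Real.log (Real.log y) ≤ c := by
    refine le_trans ?_ hcb
    apply Real.log_le_log (Real.log_pos h1y) (Real.log_le_log (by linarith) hy.2)
  have hgxy : 1 / (y * Real.log y) ≤ 1 / (x * Real.log x) := g_anti hx hy hxy
  calc (c - Real.log (Real.log y)) * (1 / (y * Real.log y))
      ≤ (c - Real.log (Real.log x)) * (1 / (y * Real.log y)) := by
        apply mul_le_mul_of_nonneg_right (by linarith) hgy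
    _ ≤ (c - Real.log (Real.log x)) * (1 / (x * Real.log x)) := by
        apply mul_le_mul_of_nonneg_left hgxy (by linarith)

/-- sum over `Icc a b` of an antitone function is at most the integral from `a-1` to `b`. -/
lemma sum_Icc_le_integral (f : ℝ → ℝ) (a b : ℕ) (ha : 1 ≤ a) (hab : a ≤ b)
    (hf : AntitoneOn f (Set.Icc ((a - 1 : ℕ) : ℝ) b)) :
    ∑ j ∈ Finset.Icc a b, f j ≤ ∫ x in ((a - 1 : ℕ) : ℝ)..(b : ℝ), f x := by
  have h := AntitoneOn.sum_le_integral_Ico (a := a - 1) (b := b) (by omega) hf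
  refine le_trans (le_of_eq ?_) h
  rw [← Finset.Ico_add_one_right_eq_Icc]
  rw [show Finset.Ico a (b + 1) = (Finset.Ico (a-1) b).map
      ⟨fun n => n + 1, add_left_injective 1⟩ by
    ext x
    simp only [Finset.mem_Ico, Finset.mem_map, Function.Embedding.coeFn_mk]
    constructor
    · intro hx; exact ⟨x - 1, by omega, by omega⟩
    · rintro ⟨y, hy, rfl⟩; omega]
  rw [Finset.sum_map]
  rfl

lemma harmonic_le (n : ℕ) (hn : 1 ≤ n) :
    ∑ s ∈ Finset.Icc 1 n, (1 : ℝ) / s ≤ 1 + Real.log n := by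
  rcases eq_or_lt_of_le hn with h | h
  · simp [← h]
  have h2n : 2 ≤ n := h
  have hsplit : Finset.Icc 1 n = insert 1 (Finset.Icc 2 n) := by
    ext x; simp only [Finset.mem_Icc, Finset.mem_insert]; omega
  rw [hsplit, Finset.sum_insert (by simp)]
  have hsum : ∑ s ∈ Finset.Icc 2 n, (1:ℝ) / s ≤ ∫ x in ((1:ℕ):ℝ)..(n:ℝ), 1 / x := by
    have := sum_Icc_le_integral (fun x => 1 / x) 2 n (by omega) h2n ?_
    · convert this using 3 <;> norm_num
    · intro x hx y hy hxy
      have : ((2:ℕ):ℝ) - 1 = 1 := by norm_num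
      apply one_div_le_one_div_of_le (by simp at hx; linarith [hx.1]) hxy
  have hint : ∫ x in ((1:ℕ):ℝ)..(n:ℝ), 1 / x = Real.log n := by
    rw [integral_one_div]
    · norm_num
    · rw [Set.uIcc_of_le (by exact_mod_cast hn)]
      intro hmem
      simp only [Set.mem_Icc, Nat.cast_one] at hmem
      linarith [hmem.1]
  norm_num at hsum hint ⊢
  rw [hint] at hsum
  linarith


lemma one_le_log {i : ℕ} (hi : 3 ≤ i) : 1 ≤ Real.log i := by
  have h3 : (3:ℝ) ≤ i := by exact_mod_cast hi
  rw [Real.le_log_iff_exp_le (by linarith)]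
  have := Real.exp_one_lt_d9
  linarith

lemma near_bound (M i m : ℕ) (hM : 1 ≤ M) (i3 : 3 ≤ i) (him : i < m)
    (hm : m ≤ (M + 1) * i) :
    ∑ j ∈ Finset.Ioc i m,
        Real.log j / (j * Real.log j ^ 2 - i * Real.log i ^ 2)
      ≤ (1 + Real.log (M + 1)) * (2 + Real.log M) := by
  set Li := Real.log i with hLi
  set C₁ := Real.log ((M:ℝ) + 1) with hC₁
  have hLi1 : 1 ≤ Li := one_le_log i3
  have hM1R : (1:ℝ) ≤ M := by exact_mod_cast hM
  have hC₁0 : 0 ≤ C₁ := Real.log_nonneg (by linarith)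
  have hlogM : 0 ≤ Real.log M := Real.log_nonneg (by exact_mod_cast hM)
  have step1 : ∀ j ∈ Finset.Ioc i m,
      Real.log j / (j * Real.log j ^ 2 - i * Real.log i ^ 2)
        ≤ ((Li + C₁) / Li ^ 2) * (1 / ((j - i : ℕ) : ℝ)) := by
    intro j hj
    simp only [Finset.mem_Ioc] at hj
    obtain ⟨hij, hjm⟩ := hj
    have hcast : ((j - i : ℕ) : ℝ) = (j : ℝ) - (i : ℝ) := by
      push_cast [Nat.cast_sub (le_of_lt hij)]; ring
    have hij' : (i : ℝ) < (j : ℝ) := by exact_mod_cast hij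
    have hLij : Li ≤ Real.log j :=
      Real.log_le_log (by positivity) (le_of_lt hij')
    have hd1 : ((j - i : ℕ) : ℝ) * Li ^ 2 ≤ j * Real.log j ^ 2 - i * Li ^ 2 := by
      rw [hcast]
      have hsq : Li ^ 2 ≤ Real.log j ^ 2 := by nlinarith [hLij, hLi1]
      have hj0 : (0:ℝ) ≤ j := Nat.cast_nonneg j
      nlinarith [mul_le_mul_of_nonneg_left hsq hj0, hij']
    have hd0 : (0:ℝ) < ((j - i : ℕ) : ℝ) * Li ^ 2 := by
      have : 1 ≤ j - i := by omega
      have : (1:ℝ) ≤ ((j - i : ℕ) : ℝ) := by exact_mod_cast this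
      nlinarith
    have hnum : Real.log j ≤ Li + C₁ := by
      have hj0 : (0:ℝ) < j := by exact_mod_cast (by omega : 0 < j)
      have hi0 : (0:ℝ) < i := by exact_mod_cast (by omega : 0 < i)
      have hjle : (j : ℝ) ≤ ((M:ℝ) + 1) * i := by
        have h' : (j:ℝ) ≤ (((M + 1) * i : ℕ) : ℝ) := by exact_mod_cast le_trans hjm hm
        push_cast at h'; linarith
      have hle := Real.log_le_log hj0 hjle
      rw [Real.log_mul (by linarith) (ne_of_gt hi0)] at hle
      linarith
    calc Real.log j / (j * Real.log j ^ 2 - i * Real.log i ^ 2)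
        ≤ (Li + C₁) / (((j - i : ℕ) : ℝ) * Li ^ 2) := by
          apply div_le_div₀ (by linarith) hnum hd0 hd1
      _ = ((Li + C₁) / Li ^ 2) * (1 / ((j - i : ℕ) : ℝ)) := by
          rw [div_mul_div_comm, mul_one, mul_comm (Li^2)]
  have step2 : ∑ j ∈ Finset.Ioc i m, (1:ℝ) / ((j - i : ℕ) : ℝ)
      = ∑ s ∈ Finset.Icc 1 (m - i), (1:ℝ) / (s : ℝ) := by
    rw [show Finset.Ioc i m = (Finset.Icc 1 (m - i)).map
        ⟨fun n => n + i, add_left_injective i⟩ by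
      ext x
      simp only [Finset.mem_Ioc, Finset.mem_map, Finset.mem_Icc,
        Function.Embedding.coeFn_mk]
      constructor
      · intro hx; exact ⟨x - i, by omega, by omega⟩
      · rintro ⟨y, hy, rfl⟩; omega]
    rw [Finset.sum_map]
    apply Finset.sum_congr rfl
    intro s _
    simp only [Function.Embedding.coeFn_mk, Nat.add_sub_cancel]
  have step3 : ∑ s ∈ Finset.Icc 1 (m - i), (1:ℝ) / (s : ℝ) ≤ 1 + Real.log M + Li := by
    have h1 : 1 ≤ m - i := by omega
    have := harmonic_le (m - i) h1
    have hmi : ((m - i : ℕ) : ℝ) ≤ (M : ℝ) * i := by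
      have : m - i ≤ M * i := by
        have h' : (M + 1) * i = M * i + i := by ring
        omega
      calc ((m - i : ℕ) : ℝ) ≤ ((M * i : ℕ) : ℝ) := by exact_mod_cast this
        _ = (M : ℝ) * i := by push_cast; ring
    have hlog : Real.log ((m - i : ℕ) : ℝ) ≤ Real.log M + Li := by
      have h := Real.log_le_log (by exact_mod_cast h1 : (0:ℝ) < ((m-i:ℕ):ℝ)) hmi
      rwa [Real.log_mul (by positivity) (by positivity)] at h
    linarith
  calc ∑ j ∈ Finset.Ioc i m, Real.log j / (j * Real.log j ^ 2 - i * Real.log i ^ 2)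
      ≤ ∑ j ∈ Finset.Ioc i m, ((Li + C₁) / Li ^ 2) * (1 / ((j - i : ℕ) : ℝ)) :=
        Finset.sum_le_sum step1
    _ = ((Li + C₁) / Li ^ 2) * ∑ j ∈ Finset.Ioc i m, (1:ℝ) / ((j - i : ℕ) : ℝ) := by
        rw [Finset.mul_sum]
    _ ≤ ((Li + C₁) / Li ^ 2) * (1 + Real.log M + Li) := by
        apply mul_le_mul_of_nonneg_left _ (by positivity)
        rw [step2]; exact step3
    _ ≤ (1 + C₁) * (2 + Real.log M) := by
        rw [div_mul_eq_mul_div, div_le_iff₀ (by positivity)]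
        have h1 : Li + C₁ ≤ (1 + C₁) * Li := by nlinarith
        have h2 : 1 + Real.log M + Li ≤ (2 + Real.log M) * Li := by nlinarith
        calc (Li + C₁) * (1 + Real.log M + Li)
            ≤ ((1 + C₁) * Li) * ((2 + Real.log M) * Li) := by
              apply mul_le_mul h1 h2 (by linarith) (by nlinarith)
          _ = (1 + C₁) * (2 + Real.log M) * Li ^ 2 := by ring

lemma sum_g_Ioc_le (m k : ℕ) (hm : 4 ≤ m) (hmk : m ≤ k) :
    ∑ j ∈ Finset.Ioc m k, 1 / ((j:ℝ) * Real.log j)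
      ≤ Real.log (Real.log k) - Real.log (Real.log m) := by
  rcases eq_or_lt_of_le hmk with h | h
  · subst h; simp
  have hm1k : m + 1 ≤ k := h
  have : Finset.Ioc m k = Finset.Icc (m+1) k := (Finset.Icc_add_one_left_eq_Ioc m k).symm
  rw [this]
  have hanti : AntitoneOn (fun y => 1 / (y * Real.log y))
      (Set.Icc (((m+1-1:ℕ)):ℝ) (k:ℝ)) := by
    apply g_anti.mono
    apply Set.Icc_subset_Icc_left
    have : ((m+1-1:ℕ):ℝ) = (m:ℝ) := by norm_num
    rw [this]; exact_mod_cast by omega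
  have hsum := sum_Icc_le_integral (fun y => 1 / (y * Real.log y)) (m+1) k (by omega)
    hm1k hanti
  have hcast : ((m+1-1:ℕ):ℝ) = (m:ℝ) := by norm_num
  rw [hcast] at hsum
  rw [integral_g (by exact_mod_cast by omega : (1:ℝ) < (m:ℝ))
    (by exact_mod_cast hmk)] at hsum
  exact hsum

lemma far_bound (M i k : ℕ) (hM : 1 ≤ M) (i3 : 3 ≤ i) (hik : i < k) :
    ∑ j ∈ Finset.Ioc (min ((M + 1) * i) k) k,
        Real.log j / (j * Real.log j ^ 2 - i * Real.log i ^ 2)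
      ≤ (1 + 1 / (M:ℝ)) *
          (Real.log (Real.log k) - Real.log (Real.log i)) := by
  set m := min ((M + 1) * i) k with hm
  have hmk : m ≤ k := min_le_right _ _
  have him : i < m := lt_min (by nlinarith) hik
  have hM0 : (0:ℝ) < M := by exact_mod_cast hM
  have hLi1 : 1 ≤ Real.log i := one_le_log i3
  have hLki : Real.log (Real.log i) ≤ Real.log (Real.log k) := by
    apply Real.log_le_log (by linarith)
    apply Real.log_le_log (by exact_mod_cast by omega : (0:ℝ) < (i:ℝ))
    exact_mod_cast le_of_lt hik
  have step1 : ∀ j ∈ Finset.Ioc m k,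
      Real.log j / (j * Real.log j ^ 2 - i * Real.log i ^ 2)
        ≤ (1 + 1 / (M:ℝ)) * (1 / ((j:ℝ) * Real.log j)) := by
    intro j hj
    simp only [Finset.mem_Ioc] at hj
    obtain ⟨hmj, hjk⟩ := hj
    have hMij : (M + 1) * i < j := by
      rcases min_lt_iff.mp hmj with h | h
      · exact h
      · omega
    have hj3 : 3 ≤ j := by nlinarith
    have hLj1 : 1 ≤ Real.log j := one_le_log hj3
    have hj0 : (0:ℝ) < j := by exact_mod_cast by omega
    have hiR : ((M:ℝ) + 1) * i ≤ (j:ℝ) := by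
      have h' : (((M+1)*i : ℕ):ℝ) ≤ (j:ℝ) := by exact_mod_cast le_of_lt hMij
      push_cast at h'
      linarith
    have hLij : Real.log i ≤ Real.log j := by
      apply Real.log_le_log (by exact_mod_cast by omega : (0:ℝ) < (i:ℝ))
      have : i ≤ j := by nlinarith
      exact_mod_cast this
    have hkey : (i:ℝ) * Real.log i ^ 2 ≤ ((j:ℝ) / ((M:ℝ)+1)) * Real.log j ^ 2 := by
      have hi' : (i:ℝ) ≤ (j:ℝ) / ((M:ℝ)+1) := by
        rw [le_div_iff₀ (by linarith)]
        linarith [hiR]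
      have hsq : Real.log i ^ 2 ≤ Real.log j ^ 2 := by nlinarith
      apply mul_le_mul hi' hsq (by positivity) (by positivity)
    set D := (j:ℝ) * Real.log j ^ 2 with hD
    have hDdiv : D * ((M:ℝ)/((M:ℝ)+1)) = D - D / ((M:ℝ)+1) := by
      field_simp; ring
    have hDfrac : (j:ℝ) / ((M:ℝ)+1) * Real.log j ^ 2 = D / ((M:ℝ)+1) := by
      rw [hD]; ring
    have hden : D * ((M:ℝ)/((M:ℝ)+1)) ≤ (j:ℝ) * Real.log j ^ 2 - i * Real.log i ^ 2 := by
      rw [hDdiv]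
      have := hkey
      rw [hDfrac] at this
      linarith
    have hdenpos : (0:ℝ) < D * ((M:ℝ)/((M:ℝ)+1)) := by
      have hD0 : 0 < D := by positivity
      positivity
    calc Real.log j / (j * Real.log j ^ 2 - i * Real.log i ^ 2)
        ≤ Real.log j / (D * ((M:ℝ)/((M:ℝ)+1))) := by
          apply div_le_div_of_nonneg_left (by linarith) hdenpos hden
      _ = (1 + 1 / (M:ℝ)) * (1 / ((j:ℝ) * Real.log j)) := by
          rw [hD]
          field_simp
  calc ∑ j ∈ Finset.Ioc m k, Real.log j / (j * Real.log j ^ 2 - i * Real.log i ^ 2)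
      ≤ ∑ j ∈ Finset.Ioc m k, (1 + 1 / (M:ℝ)) * (1 / ((j:ℝ) * Real.log j)) :=
        Finset.sum_le_sum step1
    _ = (1 + 1 / (M:ℝ)) * ∑ j ∈ Finset.Ioc m k, (1 / ((j:ℝ) * Real.log j)) := by
        rw [Finset.mul_sum]
    _ ≤ (1 + 1 / (M:ℝ)) * (Real.log (Real.log k) - Real.log (Real.log m)) := by
        apply mul_le_mul_of_nonneg_left _ (by positivity)
        exact sum_g_Ioc_le m k (by omega) hmk
    _ ≤ (1 + 1 / (M:ℝ)) * (Real.log (Real.log k) - Real.log (Real.log i)) := by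
        apply mul_le_mul_of_nonneg_left _ (by positivity)
        have : Real.log (Real.log i) ≤ Real.log (Real.log m) := by
          apply Real.log_le_log (by linarith)
          apply Real.log_le_log (by exact_mod_cast by omega : (0:ℝ) < (i:ℝ))
          exact_mod_cast le_of_lt him
        linarith

lemma outer1 (i₀ k : ℕ) (hi₀ : 3 ≤ i₀) (hk : i₀ ≤ k) :
    ∑ i ∈ Finset.Icc i₀ k, 1 / ((i:ℝ) * Real.log i)
      ≤ Real.log (Real.log k) - Real.log (Real.log ((i₀ - 1 : ℕ) : ℝ)) := by
  have hanti : AntitoneOn (fun y => 1 / (y * Real.log y))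
      (Set.Icc (((i₀-1:ℕ)):ℝ) (k:ℝ)) := by
    apply g_anti.mono
    apply Set.Icc_subset_Icc_left
    exact_mod_cast by omega
  have hsum := sum_Icc_le_integral (fun y => 1 / (y * Real.log y)) i₀ k (by omega) hk hanti
  rw [integral_g (by exact_mod_cast by omega : (1:ℝ) < ((i₀-1:ℕ):ℝ))
    (by exact_mod_cast by omega)] at hsum
  exact hsum

lemma outer2 (i₀ k : ℕ) (c : ℝ) (hi₀ : 3 ≤ i₀) (hk : i₀ ≤ k)
    (hc : Real.log (Real.log k) ≤ c) :
    ∑ i ∈ Finset.Icc i₀ k,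
        (c - Real.log (Real.log i)) * (1 / ((i:ℝ) * Real.log i))
      ≤ c ^ 2 / 2 - (c * Real.log (Real.log ((i₀ - 1 : ℕ) : ℝ))
          - (Real.log (Real.log ((i₀ - 1 : ℕ) : ℝ))) ^ 2 / 2) := by
    have hanti : AntitoneOn (fun y => (c - Real.log (Real.log y)) * (1 / (y * Real.log y)))
        (Set.Icc (((i₀-1:ℕ)):ℝ) (k:ℝ)) := by
      apply (h_anti hc).mono
      apply Set.Icc_subset_Icc_left
      exact_mod_cast by omega
    have hsum := sum_Icc_le_integral
      (fun y => (c - Real.log (Real.log y)) * (1 / (y * Real.log y))) i₀ k (by omega) hk hanti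
    rw [integral_h (by exact_mod_cast by omega : (1:ℝ) < ((i₀-1:ℕ):ℝ))
      (by exact_mod_cast by omega)] at hsum
    refine le_trans hsum ?_
    set u := Real.log (Real.log (k:ℝ))
    have : c * u - u ^ 2 / 2 ≤ c ^ 2 / 2 := by nlinarith [sq_nonneg (c - u)]
    linarith

set_option maxHeartbeats 1000000 in
lemma final_arith (ε c K c₁ M : ℝ) (hε : 0 < ε) (hM1 : 1 ≤ M) (hK1 : 1 ≤ K)
    (hc1 : 1 ≤ c) (hMε : 2 / ε ≤ M)
    (hcT : 4 / ε * (K + 2 * |c₁| + K * |c₁| + c₁ ^ 2) ≤ c) :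
    K * (c - c₁) + (1 + 1 / M) * (c ^ 2 / 2 - (c * c₁ - c₁ ^ 2 / 2))
      ≤ (1 / 2 + ε) * c ^ 2 := by
  have hM0 : (0:ℝ) < M := by linarith
  have habs1 : -c₁ ≤ |c₁| := neg_le_abs c₁
  have habs0 : 0 ≤ |c₁| := abs_nonneg c₁
  have habs3 : c₁ ^ 2 = |c₁| ^ 2 := (sq_abs c₁).symm
  have hinv : 1 / M ≤ ε / 2 := by
    rw [div_le_div_iff₀ hM0 two_pos]
    have := (div_le_iff₀ hε).mp hMε
    nlinarith
  have hinv1 : 1 / M ≤ 1 := by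
    rw [div_le_one hM0]; linarith
  have hX : K + 2 * |c₁| + K * |c₁| + c₁ ^ 2 ≤ ε / 4 * c := by
    have h4 : (0:ℝ) < 4 / ε := by positivity
    have := hcT
    rw [div_mul_eq_mul_div, div_le_iff₀ hε] at this
    nlinarith
  have e1 : K * (c - c₁) ≤ K * c + K * |c₁| := by nlinarith
  have e4 : c ^ 2 / 2 - (c * c₁ - c₁ ^ 2 / 2) ≤ c ^ 2 / 2 + c * |c₁| + c₁ ^ 2 / 2 := by
    nlinarith [mul_le_mul_of_nonneg_left habs1 (by linarith : (0:ℝ) ≤ c)]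
  have hB0 : (0:ℝ) ≤ c * |c₁| + c₁ ^ 2 / 2 := by positivity
  have e5 : (1 + 1 / M) * (c ^ 2 / 2 - (c * c₁ - c₁ ^ 2 / 2))
      ≤ (1 + 1 / M) * (c ^ 2 / 2) + 2 * (c * |c₁| + c₁ ^ 2 / 2) := by
    have h2 : (1 + 1 / M) ≤ 2 := by linarith
    have hp : (0:ℝ) < 1 + 1 / M := by positivity
    have h3 := mul_le_mul_of_nonneg_left e4 (le_of_lt hp)
    have h4 : (1 + 1 / M) * (c * |c₁| + c₁ ^ 2 / 2) ≤ 2 * (c * |c₁| + c₁ ^ 2 / 2) :=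
      mul_le_mul_of_nonneg_right h2 hB0
    nlinarith [h3, h4]
  have e6 : (1 + 1 / M) * (c ^ 2 / 2) ≤ c ^ 2 / 2 + ε / 4 * c ^ 2 := by
    have : 1 / M * (c ^ 2 / 2) ≤ ε / 2 * (c ^ 2 / 2) :=
      mul_le_mul_of_nonneg_right hinv (by positivity)
    nlinarith
  have e7 : K * c + K * |c₁| + 2 * (c * |c₁|) + c₁ ^ 2 ≤ ε / 4 * c ^ 2 := by
    have step : K * c + K * |c₁| + 2 * (c * |c₁|) + c₁ ^ 2
        ≤ (K + 2 * |c₁| + K * |c₁| + c₁ ^ 2) * c := by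
      nlinarith [mul_le_mul_of_nonneg_left hc1 (by positivity : (0:ℝ) ≤ K * |c₁|),
        mul_le_mul_of_nonneg_left hc1 (sq_nonneg c₁)]
    calc K * c + K * |c₁| + 2 * (c * |c₁|) + c₁ ^ 2
        ≤ (K + 2 * |c₁| + K * |c₁| + c₁ ^ 2) * c := step
      _ ≤ (ε / 4 * c) * c := mul_le_mul_of_nonneg_right hX (by linarith)
      _ = ε / 4 * c ^ 2 := by ring
  nlinarith [e1, e5, e6, e7, sq_nonneg c, hε.le]

end DSE


open DSE in
/-- Double-sum estimate (Lemma 6 of the paper): for a fixed starting index `i₀ ≥ 3`,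
`∑_{i₀ ≤ i < j ≤ k} (1/(i ln i)) · ln j / (j ln² j − i ln² i) ≤ (1/2 + o(1)) ln² ln k`
as `k → ∞`. -/
theorem double_sum_estimate (i₀ : ℕ) (hi₀ : 3 ≤ i₀) :
    ∀ ε > (0 : ℝ), ∀ᶠ k : ℕ in atTop,
      (∑ j ∈ Finset.Icc i₀ k, ∑ i ∈ Finset.Ico i₀ j,
          (1 / (i * Real.log i)) *
            (Real.log j / (j * (Real.log j) ^ 2 - i * (Real.log i) ^ 2)))
        ≤ (1 / 2 + ε) * (Real.log (Real.log k)) ^ 2 := by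
  intro ε hε
  set M : ℕ := ⌈2 / ε⌉₊ + 1 with hMdef
  have hM1 : 1 ≤ M := by omega
  have hM1R : (1:ℝ) ≤ (M:ℝ) := by exact_mod_cast hM1
  have hMε : 2 / ε ≤ (M:ℝ) := by
    have h := Nat.le_ceil (2 / ε)
    have : ((⌈2 / ε⌉₊ : ℕ) : ℝ) ≤ (M:ℝ) := by exact_mod_cast Nat.le_succ _
    linarith
  set K : ℝ := (1 + Real.log ((M:ℝ) + 1)) * (2 + Real.log (M:ℝ)) with hKdef
  have hK1 : 1 ≤ K := by
    have h1 : 0 ≤ Real.log ((M:ℝ) + 1) := Real.log_nonneg (by linarith)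
    have h2 : 0 ≤ Real.log (M:ℝ) := Real.log_nonneg hM1R
    nlinarith
  have hK0 : 0 ≤ K := by linarith
  set c₁ : ℝ := Real.log (Real.log ((i₀ - 1 : ℕ) : ℝ)) with hc₁def
  set T : ℝ := 4 / ε * (K + 2 * |c₁| + K * |c₁| + c₁ ^ 2) with hTdef
  have htend : Tendsto (fun k : ℕ => Real.log (Real.log k)) atTop atTop :=
    (Real.tendsto_log_atTop.comp Real.tendsto_log_atTop).comp
      tendsto_natCast_atTop_atTop
  filter_upwards [htend.eventually_ge_atTop (max 1 T),
    eventually_ge_atTop (i₀ + 2)] with k hk1 hk2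
  set c : ℝ := Real.log (Real.log (k:ℝ)) with hcdef
  have hc1 : 1 ≤ c := le_trans (le_max_left _ _) hk1
  have hcT : T ≤ c := le_trans (le_max_right _ _) hk1
  rw [Finset.sum_comm' (t' := Finset.Ico i₀ k) (s' := fun i => Finset.Ioc i k)
    (by intro x y
        simp only [Finset.mem_Icc, Finset.mem_Ico, Finset.mem_Ioc]
        omega)]
  have hM0 : (0:ℝ) < (M:ℝ) := by linarith
  have inner : ∀ i ∈ Finset.Ico i₀ k,
      ∑ j ∈ Finset.Ioc i k,
          (1 / ((i:ℝ) * Real.log i)) *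
            (Real.log j / (j * Real.log j ^ 2 - i * Real.log i ^ 2))
        ≤ (1 / ((i:ℝ) * Real.log i)) *
            (K + (1 + 1 / (M:ℝ)) * (c - Real.log (Real.log i))) := by
    intro i hi
    simp only [Finset.mem_Ico] at hi
    have hi3 : 3 ≤ i := le_trans hi₀ hi.1
    have hik : i < k := hi.2
    have hLi1 : 1 ≤ Real.log i := one_le_log hi3
    have hpos : (0:ℝ) ≤ 1 / ((i:ℝ) * Real.log i) := by
      have : (0:ℝ) < i := by exact_mod_cast (by omega : 0 < i)
      positivity
    rw [← Finset.mul_sum]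
    apply mul_le_mul_of_nonneg_left _ hpos
    set m := min ((M + 1) * i) k with hmdef
    have hm2i : i < (M + 1) * i := by
      have h1 : i < 2 * i := by omega
      have h2 : 2 * i ≤ (M + 1) * i := Nat.mul_le_mul_right i (by omega)
      omega
    have him : i < m := lt_min hm2i hik
    have hmk : m ≤ k := min_le_right _ _
    rw [← Finset.sum_Ioc_consecutive _ (le_of_lt him) hmk]
    have hnear := near_bound M i m hM1 hi3 him (min_le_left _ _)
    have hfar := far_bound M i k hM1 hi3 hik
    rw [← hmdef] at hfar
    have hnear' : ∑ j ∈ Finset.Ioc i m,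
        Real.log j / (j * Real.log j ^ 2 - i * Real.log i ^ 2) ≤ K := by
      refine le_trans hnear (le_of_eq ?_)
      rw [hKdef]
    linarith [hnear', hfar]
  refine le_trans (Finset.sum_le_sum inner) ?_
  have hsplit : ∑ i ∈ Finset.Ico i₀ k,
      (1 / ((i:ℝ) * Real.log i)) *
        (K + (1 + 1 / (M:ℝ)) * (c - Real.log (Real.log i)))
      = K * (∑ i ∈ Finset.Ico i₀ k, 1 / ((i:ℝ) * Real.log i))
        + (1 + 1 / (M:ℝ)) * (∑ i ∈ Finset.Ico i₀ k,
            (c - Real.log (Real.log i)) * (1 / ((i:ℝ) * Real.log i))) := by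
    rw [Finset.mul_sum, Finset.mul_sum, ← Finset.sum_add_distrib]
    apply Finset.sum_congr rfl
    intro i _
    ring
  rw [hsplit]
  have hIco : Finset.Ico i₀ k = Finset.Icc i₀ (k - 1) := by
    rw [← Finset.Ico_add_one_right_eq_Icc]
    congr 1
    omega
  have hk14 : 4 ≤ k - 1 := by omega
  have hlnk1 : Real.log (Real.log ((k - 1 : ℕ) : ℝ)) ≤ c := by
    have h4 : (4:ℝ) ≤ ((k-1:ℕ):ℝ) := by exact_mod_cast hk14
    have hle : ((k-1:ℕ):ℝ) ≤ (k:ℝ) := by exact_mod_cast Nat.sub_le k 1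
    apply Real.log_le_log (Real.log_pos (by linarith))
    exact Real.log_le_log (by linarith) hle
  have h1 := outer1 i₀ (k - 1) hi₀ (by omega)
  have h2 := outer2 i₀ (k - 1) c hi₀ (by omega) hlnk1
  have hfac : (0:ℝ) ≤ 1 + 1 / (M:ℝ) := by positivity
  have hsum1 : K * (∑ i ∈ Finset.Ico i₀ k, 1 / ((i:ℝ) * Real.log i))
      ≤ K * (c - c₁) := by
    apply mul_le_mul_of_nonneg_left _ hK0
    rw [hIco]
    refine le_trans h1 ?_
    linarith
  have hsum2 : (1 + 1 / (M:ℝ)) * (∑ i ∈ Finset.Ico i₀ k,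
        (c - Real.log (Real.log i)) * (1 / ((i:ℝ) * Real.log i)))
      ≤ (1 + 1 / (M:ℝ)) * (c ^ 2 / 2 - (c * c₁ - c₁ ^ 2 / 2)) := by
    apply mul_le_mul_of_nonneg_left _ hfac
    rw [hIco]
    exact h2
  refine le_trans (add_le_add hsum1 hsum2) ?_
  exact final_arith ε c K c₁ M hε hM1R hK1 hc1 hMε hcT

end DSEproof
end
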